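/- Let φ be an entire function on ℂ of order 2 and let α ∈ (0, π/2). Suppose |φ(z)| ≤ C(1+|z|)^N on the boundary rays of the angular sector {r e^{iβ} : r ≥ 0, β₀ ≤ β ≤ β₀ + α}. Then |φ(z)| ≤ 2^N C (1+|z|)^N for all z inside the sector. -/

import Mathlib

open Real

/-- Phragmén–Lindelöf for an entire function of order 2 on an angular sector
of opening α < π/2 : a polynomial bound on the boundary rays propagates to the
interior of the sector (with constant `2^N C`). -/
theorem phragmen_lindelof_sector (φ : ℂ → ℂ) (hφ : Differentiable ℂ φ)
    (horder : ∃ C' > (0 : ℝ), ∀ z : ℂ, ‖φ z‖ ≤ C' * Real.exp (C' * ‖z‖ ^ 2))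
    (N : ℕ) (C : ℝ) (hC : 0 < C) (β₀ α : ℝ) (hα : α ∈ Set.Ioo 0 (π / 2))
    (hbd : ∀ r : ℝ, 0 ≤ r →
      ‖φ ((r : ℂ) * Complex.exp (Complex.I * β₀))‖ ≤ C * (1 + r) ^ N ∧
      ‖φ ((r : ℂ) * Complex.exp (Complex.I * (β₀ + α)))‖ ≤ C * (1 + r) ^ N) :
    ∀ r : ℝ, 0 ≤ r → ∀ β : ℝ, β₀ ≤ β → β ≤ β₀ + α →
      ‖φ ((r : ℂ) * Complex.exp (Complex.I * β))‖ ≤ 2 ^ N * C * (1 + r) ^ N := by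
  obtain ⟨hα0, hα2⟩ := hα
  obtain ⟨C', hC'0, hC'⟩ := horder
  set γ : ℝ := β₀ + α / 2 with hγ
  set d : ℂ → ℂ := fun z => 1 + Complex.exp (-(Complex.I * γ)) * z with hd
  -- key norm estimates on the sector
  have key : ∀ r : ℝ, 0 ≤ r → ∀ β : ℝ, β₀ ≤ β → β ≤ β₀ + α →
      (1 + r) / 2 ≤ ‖d ((r : ℂ) * Complex.exp (Complex.I * β))‖ ∧
      ‖d ((r : ℂ) * Complex.exp (Complex.I * β))‖ ≤ 1 + r := by
    intro r hr β hβ1 hβ2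
    have harg : Complex.I * (β : ℂ) + -(Complex.I * (γ : ℂ))
        = ((β - γ : ℝ) : ℂ) * Complex.I := by push_cast; ring
    have hz : d ((r : ℂ) * Complex.exp (Complex.I * β))
        = 1 + (r : ℂ) * Complex.exp (((β - γ : ℝ) : ℂ) * Complex.I) := by
      simp only [hd]
      rw [mul_comm (Complex.exp _) ((r : ℂ) * _), mul_assoc, ← Complex.exp_add, harg]
    set θ : ℝ := β - γ with hθdef
    have hθ : |θ| ≤ α / 2 := abs_le.mpr ⟨by simp only [hθdef, hγ]; linarith,
      by simp only [hθdef, hγ]; linarith⟩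
    have hcos : (1 : ℝ) / 2 ≤ Real.cos θ := by
      rw [← Real.cos_abs]
      have h1 : Real.cos (π / 4) ≤ Real.cos |θ| := by
        apply Real.cos_le_cos_of_nonneg_of_le_pi (abs_nonneg θ)
        · linarith [Real.pi_pos]
        · linarith
      have h2 : (1 : ℝ) / 2 ≤ Real.cos (π / 4) := by
        rw [Real.cos_pi_div_four]
        nlinarith [Real.sq_sqrt (by norm_num : (2:ℝ) ≥ 0), Real.sqrt_nonneg 2]
      linarith
    constructor
    · have hre : (1 + (r : ℂ) * Complex.exp (((θ : ℝ) : ℂ) * Complex.I)).re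
          = 1 + r * Real.cos θ := by
        simp [Complex.add_re, Complex.mul_re, Complex.exp_ofReal_mul_I_re]
      calc (1 + r) / 2 ≤ 1 + r * Real.cos θ := by nlinarith
        _ = (1 + (r : ℂ) * Complex.exp (((θ : ℝ) : ℂ) * Complex.I)).re := hre.symm
        _ ≤ ‖1 + (r : ℂ) * Complex.exp (((θ : ℝ) : ℂ) * Complex.I)‖ := by
            exact Complex.re_le_norm _
        _ = ‖d ((r : ℂ) * Complex.exp (Complex.I * β))‖ := by rw [hz]
    · rw [hz]
      calc ‖1 + (r : ℂ) * Complex.exp (((θ : ℝ) : ℂ) * Complex.I)‖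
          ≤ ‖(1 : ℂ)‖ + ‖(r : ℂ) * Complex.exp (((θ : ℝ) : ℂ) * Complex.I)‖ :=
            norm_add_le _ _
        _ = 1 + r := by
            simp [map_mul, Complex.norm_exp, abs_of_nonneg hr]
  set f : ℂ → ℂ := fun w => φ (Complex.exp w) / (d (Complex.exp w)) ^ N with hf
  have hexp : ∀ w : ℂ, Complex.exp w
      = ((Real.exp w.re : ℝ) : ℂ) * Complex.exp (Complex.I * (w.im : ℂ)) := by
    intro w
    conv_lhs => rw [← Complex.re_add_im w]
    rw [Complex.exp_add, ← Complex.ofReal_exp, mul_comm ((w.im : ℂ)) Complex.I]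
  have hlow : ∀ w : ℂ, β₀ ≤ w.im → w.im ≤ β₀ + α →
      (1 + Real.exp w.re) / 2 ≤ ‖d (Complex.exp w)‖ ∧
      ‖d (Complex.exp w)‖ ≤ 1 + Real.exp w.re := by
    intro w h1 h2
    rw [hexp w]
    exact key _ (Real.exp_pos _).le _ h1 h2
  have hdpos : ∀ w : ℂ, β₀ ≤ w.im → w.im ≤ β₀ + α → 0 < ‖d (Complex.exp w)‖ := by
    intro w h1 h2
    have := (hlow w h1 h2).1
    nlinarith [Real.exp_pos w.re]
  -- boundary bound for f
  have bdry : ∀ w : ℂ, (w.im = β₀ ∨ w.im = β₀ + α) → ‖f w‖ ≤ 2 ^ N * C := by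
    intro w hw
    have him1 : β₀ ≤ w.im := by rcases hw with h | h <;> rw [h] <;> linarith
    have him2 : w.im ≤ β₀ + α := by rcases hw with h | h <;> rw [h] <;> linarith
    set r : ℝ := Real.exp w.re with hrdef
    have hr : 0 ≤ r := (Real.exp_pos _).le
    have hφb : ‖φ (Complex.exp w)‖ ≤ C * (1 + r) ^ N := by
      rw [hexp w]
      rcases hw with h | h <;> rw [h]
      · exact (hbd r hr).1
      · rw [Complex.ofReal_add]
        exact (hbd r hr).2
    have hdl : (1 + r) / 2 ≤ ‖d (Complex.exp w)‖ := (hlow w him1 him2).1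
    have hdN : ((1 + r) / 2) ^ N ≤ ‖d (Complex.exp w)‖ ^ N :=
      pow_le_pow_left₀ (by linarith) hdl N
    have h2 : (2 : ℝ) ^ N * ((1 + r) / 2) ^ N = (1 + r) ^ N := by
      rw [← mul_pow]; congr 1; field_simp
    have hpos : 0 < ‖d (Complex.exp w)‖ := hdpos w him1 him2
    simp only [hf]
    rw [norm_div, norm_pow, div_le_iff₀ (pow_pos hpos N)]
    calc ‖φ (Complex.exp w)‖ ≤ C * (1 + r) ^ N := hφb
      _ = C * (2 ^ N * ((1 + r) / 2) ^ N) := by rw [h2]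
      _ ≤ C * (2 ^ N * ‖d (Complex.exp w)‖ ^ N) := by
          apply mul_le_mul_of_nonneg_left _ hC.le
          exact mul_le_mul_of_nonneg_left hdN (by positivity)
      _ = 2 ^ N * C * ‖d (Complex.exp w)‖ ^ N := by ring
  -- Phragmén–Lindelöf on the strip
  have hmain : ∀ w : ℂ, β₀ ≤ w.im → w.im ≤ β₀ + α → ‖f w‖ ≤ 2 ^ N * C := by
    intro w hw1 hw2
    apply PhragmenLindelof.horizontal_strip (a := β₀) (b := β₀ + α) ?_ ?_ ?_ ?_ hw1 hw2
    · -- DiffContOnCl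
      apply DifferentiableOn.diffContOnCl
      have hsub : closure (Complex.im ⁻¹' Set.Ioo β₀ (β₀ + α))
          ⊆ Complex.im ⁻¹' Set.Icc β₀ (β₀ + α) :=
        closure_minimal (fun x hx => ⟨hx.1.le, hx.2.le⟩)
          (isClosed_Icc.preimage Complex.continuous_im)
      apply DifferentiableOn.mono _ hsub
      intro w hw
      apply DifferentiableAt.differentiableWithinAt
      simp only [hf, hd]
      apply DifferentiableAt.div
      · exact (hφ _).comp w (Complex.differentiable_exp w)
      · apply DifferentiableAt.pow
        exact (differentiableAt_const _).add
          ((differentiableAt_const _).mul (Complex.differentiable_exp w))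
      · apply pow_ne_zero
        have := hdpos w hw.1 hw.2
        simp only [hd] at this
        intro h0
        rw [h0, norm_zero] at this
        exact lt_irrefl _ this
    · -- growth
      refine ⟨2, ?_, C', ?_⟩
      · have hba : β₀ + α - β₀ = α := by ring
        rw [hba, lt_div_iff₀ hα0]
        linarith
      · rw [Asymptotics.isBigO_iff]
        refine ⟨2 ^ N * C', ?_⟩
        rw [Filter.eventually_inf_principal]
        apply Filter.Eventually.of_forall
        intro w hw
        have him1 : β₀ ≤ w.im := (hw : w.im ∈ Set.Ioo _ _).1.le
        have him2 : w.im ≤ β₀ + α := (hw : w.im ∈ Set.Ioo _ _).2.le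
        have hE : ‖φ (Complex.exp w)‖
            ≤ C' * Real.exp (C' * Real.exp (2 * |w.re|)) := by
          refine le_trans (hC' _) ?_
          apply mul_le_mul_of_nonneg_left _ hC'0.le
          apply Real.exp_le_exp.mpr
          apply mul_le_mul_of_nonneg_left _ hC'0.le
          have h1 : ‖Complex.exp w‖ ^ 2 = Real.exp (2 * w.re) := by
            rw [Complex.norm_exp, sq, ← Real.exp_add]; ring_nf
          rw [h1]
          exact Real.exp_le_exp.mpr (by
            have := le_abs_self w.re; linarith)
        have hdl : (1 : ℝ) / 2 ≤ ‖d (Complex.exp w)‖ := by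
          have := (hlow w him1 him2).1
          nlinarith [Real.exp_pos w.re]
        have hdN : ((1 : ℝ) / 2) ^ N ≤ ‖d (Complex.exp w)‖ ^ N :=
          pow_le_pow_left₀ (by norm_num) hdl N
        have hpos : 0 < ‖d (Complex.exp w)‖ := hdpos w him1 him2
        have h1d : (1 : ℝ) ≤ 2 ^ N * ‖d (Complex.exp w)‖ ^ N := by
          calc (1 : ℝ) = 2 ^ N * ((1 : ℝ) / 2) ^ N := by
                rw [← mul_pow]; norm_num
            _ ≤ 2 ^ N * ‖d (Complex.exp w)‖ ^ N :=
                mul_le_mul_of_nonneg_left hdN (by positivity)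
        have hEnn : 0 ≤ C' * Real.exp (C' * Real.exp (2 * |w.re|)) := by positivity
        simp only [hf]
        rw [norm_div, norm_pow, div_le_iff₀ (pow_pos hpos N)]
        have hR : ‖Real.exp (C' * Real.exp (2 * |w.re|))‖
            = Real.exp (C' * Real.exp (2 * |w.re|)) := by
          rw [Real.norm_eq_abs, abs_of_pos (Real.exp_pos _)]
        rw [hR]
        nlinarith [mul_le_mul_of_nonneg_left h1d hEnn]
    · intro z hz
      exact bdry z (Or.inl hz)
    · intro z hz
      exact bdry z (Or.inr hz)
  -- conclude
  intro r hr β hβ1 hβ2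
  rcases eq_or_lt_of_le hr with h0 | h0
  · subst h0
    have h1 := (hbd 0 le_rfl).1
    have hφ0 : ‖φ 0‖ ≤ C := by simpa using h1
    have h2N : (1 : ℝ) ≤ 2 ^ N := by
      have := pow_le_pow_left₀ (by norm_num : (0:ℝ) ≤ 1) (by norm_num : (1:ℝ) ≤ 2) N
      simpa using this
    simp only [Complex.ofReal_zero, zero_mul, add_zero, one_pow, mul_one]
    nlinarith
  · set w : ℂ := (Real.log r : ℂ) + (β : ℂ) * Complex.I with hwdef
    have hwre : w.re = Real.log r := by simp [hwdef]
    have hwim : w.im = β := by simp [hwdef]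
    have hew : Complex.exp w = (r : ℂ) * Complex.exp (Complex.I * β) := by
      rw [hwdef, Complex.exp_add, ← Complex.ofReal_exp, Real.exp_log h0,
        mul_comm ((β : ℂ)) Complex.I]
    have hm := hmain w (by rw [hwim]; exact hβ1) (by rw [hwim]; exact hβ2)
    simp only [hf] at hm
    rw [hew, norm_div, norm_pow] at hm
    have hk := key r hr β hβ1 hβ2
    have hpos : 0 < ‖d ((r : ℂ) * Complex.exp (Complex.I * β))‖ := by
      nlinarith [hk.1]
    rw [div_le_iff₀ (pow_pos hpos N)] at hm
    calc ‖φ ((r : ℂ) * Complex.exp (Complex.I * β))‖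
        ≤ 2 ^ N * C * ‖d ((r : ℂ) * Complex.exp (Complex.I * β))‖ ^ N := hm
      _ ≤ 2 ^ N * C * (1 + r) ^ N := by
          apply mul_le_mul_of_nonneg_left _ (by positivity)
          exact pow_le_pow_left₀ (norm_nonneg _) hk.2 N
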